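/- Let L be a positive integer, let d ∈ ℍ and x ∈ ℍ^L be fixed, define the error e(w) = d − Σ_{l} w_l·x_l for w ∈ ℍ^L, and let f : ℍ^L → ℍ be f(w) = e(w)·e(w)*. Then for every index m and every point w ∈ ℍ^L, the m-th HR*-partial derivative of f at w equals −(1/2)·e(w)·x_m*; that is, ∂(e·e*)/∂w_m* = −(1/2)·e·x_m*. -/

import Mathlib

open Quaternion

/-- The imaginary unit `i` of the real quaternions. -/
def qI : ℍ[ℝ] := ⟨0, 1, 0, 0⟩

/-- The imaginary unit `j` of the real quaternions. -/
def qJ : ℍ[ℝ] := ⟨0, 0, 1, 0⟩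

/-- The imaginary unit `k` of the real quaternions. -/
def qK : ℍ[ℝ] := ⟨0, 0, 0, 1⟩

/-- The `m`-th HR*-partial derivative of `f : ℍ^L → ℍ` at `w`:
`(1/4) (D_{1,m} f(w) + (D_{i,m} f(w))·i + (D_{j,m} f(w))·j + (D_{k,m} f(w))·k)`,
where `D_{v,m} f(w)` is the real Fréchet derivative of `f` at `w` in direction `v·e_m`. -/
noncomputable def HRStarPartial {L : ℕ} (f : (Fin L → ℍ[ℝ]) → ℍ[ℝ]) (m : Fin L)
    (w : Fin L → ℍ[ℝ]) : ℍ[ℝ] :=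
  (4 : ℍ[ℝ])⁻¹ * (fderiv ℝ f w (Pi.single m 1) + fderiv ℝ f w (Pi.single m qI) * qI
    + fderiv ℝ f w (Pi.single m qJ) * qJ + fderiv ℝ f w (Pi.single m qK) * qK)

/-- The continuous linear map `v ↦ ∑ l, v l * x l`. -/
noncomputable def sumMulCLM (L : ℕ) (x : Fin L → ℍ[ℝ]) : (Fin L → ℍ[ℝ]) →L[ℝ] ℍ[ℝ] :=
  ∑ l, (ContinuousLinearMap.proj (R := ℝ) (φ := fun _ : Fin L => ℍ[ℝ]) l).smulRight (x l)

lemma sumMulCLM_apply (L : ℕ) (x : Fin L → ℍ[ℝ]) (v : Fin L → ℍ[ℝ]) :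
    sumMulCLM L x v = ∑ l, v l * x l := by
  simp [sumMulCLM, ContinuousLinearMap.sum_apply, smul_eq_mul]

/-- `star` on the quaternions as a continuous `ℝ`-linear map. -/
noncomputable def starCLM : ℍ[ℝ] →L[ℝ] ℍ[ℝ] :=
  { toFun := star
    map_add' := star_add
    map_smul' := fun r a => by ext <;> simp
    cont := continuous_star }

@[simp] lemma starCLM_apply (a : ℍ[ℝ]) : starCLM a = star a := rfl

lemma inv4 : (4:ℍ[ℝ])⁻¹ = (⟨4⁻¹, 0, 0, 0⟩ : ℍ[ℝ]) := by
  rw [show (4:ℍ[ℝ]) = (((4:ℝ)):ℍ[ℝ]) by norm_cast, ← Quaternion.coe_inv]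
  rfl

lemma inv2 : (2:ℍ[ℝ])⁻¹ = (⟨2⁻¹, 0, 0, 0⟩ : ℍ[ℝ]) := by
  rw [show (2:ℍ[ℝ]) = (((2:ℝ)):ℍ[ℝ]) by norm_cast, ← Quaternion.coe_inv]
  rfl

set_option maxHeartbeats 2000000 in
lemma quat_key (E a : ℍ[ℝ]) :
    (4 : ℍ[ℝ])⁻¹ * ((E * star (-((1:ℍ[ℝ]) * a)) + -((1:ℍ[ℝ]) * a) * star E)
      + (E * star (-(qI * a)) + -(qI * a) * star E) * qI
      + (E * star (-(qJ * a)) + -(qJ * a) * star E) * qJ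
      + (E * star (-(qK * a)) + -(qK * a) * star E) * qK)
      = -(2 : ℍ[ℝ])⁻¹ * (E * star a) := by
  have h4 : ((4:ℍ[ℝ])⁻¹).re = 4⁻¹ ∧ ((4:ℍ[ℝ])⁻¹).imI = 0 ∧ ((4:ℍ[ℝ])⁻¹).imJ = 0 ∧
      ((4:ℍ[ℝ])⁻¹).imK = 0 := by rw [inv4]; exact ⟨rfl, rfl, rfl, rfl⟩
  have h2 : ((2:ℍ[ℝ])⁻¹).re = 2⁻¹ ∧ ((2:ℍ[ℝ])⁻¹).imI = 0 ∧ ((2:ℍ[ℝ])⁻¹).imJ = 0 ∧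
      ((2:ℍ[ℝ])⁻¹).imK = 0 := by rw [inv2]; exact ⟨rfl, rfl, rfl, rfl⟩
  have hI : qI.re = 0 ∧ qI.imI = 1 ∧ qI.imJ = 0 ∧ qI.imK = 0 := ⟨rfl, rfl, rfl, rfl⟩
  have hJ : qJ.re = 0 ∧ qJ.imI = 0 ∧ qJ.imJ = 1 ∧ qJ.imK = 0 := ⟨rfl, rfl, rfl, rfl⟩
  have hK : qK.re = 0 ∧ qK.imI = 0 ∧ qK.imJ = 0 ∧ qK.imK = 1 := ⟨rfl, rfl, rfl, rfl⟩
  ext <;> simp [h4, h2, hI, hJ, hK] <;> ring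

set_option maxHeartbeats 2000000 in
/-- With e(w) = d − Σ w_l·x_l, we have ∂(e·e*)/∂w_m* = −(1/2)·e·x_m*. -/
theorem hr_star_partial_error_sq (L : ℕ) (hL : 0 < L) (d : ℍ[ℝ]) (x : Fin L → ℍ[ℝ])
    (m : Fin L) (w : Fin L → ℍ[ℝ]) :
    HRStarPartial (fun v => (d - ∑ l, v l * x l) * star (d - ∑ l, v l * x l)) m w
      = -(2 : ℍ[ℝ])⁻¹ * ((d - ∑ l, w l * x l) * star (x m)) := by
  set G := sumMulCLM L x with hGdef
  set S := starCLM with hSdef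
  set E := d - ∑ l, w l * x l with hE
  have hG : HasFDerivAt (fun v : Fin L → ℍ[ℝ] => ∑ l, v l * x l) G w := by
    rw [show (fun v : Fin L → ℍ[ℝ] => ∑ l, v l * x l) = ⇑G from
      funext fun v => (sumMulCLM_apply L x v).symm]
    exact G.hasFDerivAt
  have he : HasFDerivAt (fun v : Fin L → ℍ[ℝ] => d - ∑ l, v l * x l) (-G) w := by
    have h0 := (hasFDerivAt_const d w).sub hG
    rw [zero_sub] at h0
    exact h0
  have hstar : HasFDerivAt (fun v : Fin L → ℍ[ℝ] => star (d - ∑ l, v l * x l))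
      (S.comp (-G)) w := by
    rw [show (fun v : Fin L → ℍ[ℝ] => star (d - ∑ l, v l * x l))
        = ⇑S ∘ (fun v : Fin L → ℍ[ℝ] => d - ∑ l, v l * x l) from
      funext fun v => (starCLM_apply _).symm]
    exact S.hasFDerivAt.comp w he
  have hf := he.mul' hstar
  have hfd : fderiv ℝ (fun v => (d - ∑ l, v l * x l) * star (d - ∑ l, v l * x l)) w = _ :=
    hf.fderiv
  have hGone : ∀ q : ℍ[ℝ], G (Pi.single m q) = q * x m := by
    intro q
    rw [hGdef, sumMulCLM_apply]
    simp [Pi.single_apply, ite_mul]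
  rw [HRStarPartial, hfd]
  simp only [ContinuousLinearMap.add_apply, ContinuousLinearMap.coe_smul',
    ContinuousLinearMap.smulRight_apply, ContinuousLinearMap.coe_comp',
    ContinuousLinearMap.neg_apply, Pi.smul_apply, Function.comp_apply, hGone, hSdef,
    starCLM_apply, smul_eq_mul]
  exact quat_key E (x m)
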